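/- arXiv:0803.2091 — 3 statements merged into one kernel-verified Lean document; each statement's English description precedes it below -/
import Mathlib

section
/- Let α be a strong dual vector of a finite game, let i be a player, and let σ_{-i} be a profile of mixed strategies of the players other than i such that σ_j is α_j-stationary for every j ≠ i. Then for every pure strategy c_i of player i having marginal probability zero in all correlated equilibria, U_i(σ_{-i}, c_i) < U_i(σ_{-i}, α_i*c_i). -/
open scoped BigOperators

section Prelim

variable {S : Type} [Fintype S] [DecidableEq S]

/-- `σ` is a mixed strategy (probability distribution) on the finite set `S`. -/
def IsMixed (σ : S → ℝ) : Prop := (∀ s, 0 ≤ σ s) ∧ ∑ s, σ s = 1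

/-- The Dirac measure `δ_s`. -/
def dirac (s : S) : S → ℝ := fun d => if d = s then 1 else 0

/-- `α_i * σ_i`, the image of the mixed strategy `σ` under the deviation plan `αᵢ`,
where `αᵢ c d` is the probability `αᵢ(d | c)`. -/
def devImage (αᵢ : S → S → ℝ) (σ : S → ℝ) : S → ℝ := fun d => ∑ c, σ c * αᵢ c d

/-- `σ` is `αᵢ`-stationary: `αᵢ * σ = σ`. -/
def IsStationaryStrat (αᵢ : S → S → ℝ) (σ : S → ℝ) : Prop := devImage αᵢ σ = σ

/-- A nonempty `B ⊆ S` is `αᵢ`-absorbing if `supp (αᵢ * c) ⊆ B` for all `c ∈ B`. -/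
def IsAbsorbing (αᵢ : S → S → ℝ) (B : Finset S) : Prop :=
  B.Nonempty ∧ ∀ c ∈ B, ∀ d, 0 < αᵢ c d → d ∈ B

/-- A minimal absorbing set: an absorbing set containing no proper nonempty absorbing subset. -/
def IsMinimalAbsorbing (αᵢ : S → S → ℝ) (B : Finset S) : Prop :=
  IsAbsorbing αᵢ B ∧ ∀ B' ⊆ B, IsAbsorbing αᵢ B' → B' = B

/-- `C_i/α_i`: the set of `αᵢ`-stationary mixed strategies whose support is contained
in some minimal `αᵢ`-absorbing set. -/
def ReducedSet (αᵢ : S → S → ℝ) : Set (S → ℝ) :=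
  {σ | IsMixed σ ∧ IsStationaryStrat αᵢ σ ∧
    ∃ B : Finset S, IsMinimalAbsorbing αᵢ B ∧ ∀ s, σ s ≠ 0 → s ∈ B}

end Prelim

section Games

variable {N : Type} [Fintype N] [DecidableEq N]
  {C : N → Type} [∀ i, Fintype (C i)] [∀ i, DecidableEq (C i)]

/-- Marginal probability of the pure strategy `cᵢ` of player `i` under `μ`. -/
def marginal (μ : (∀ j, C j) → ℝ) (i : N) (cᵢ : C i) : ℝ :=
  ∑ c : ∀ j, C j, if c i = cᵢ then μ c else 0

/-- The incentive sum `∑_{c_{-i}} μ(c_{-i},cᵢ)[U_i(c_{-i},dᵢ) − U_i(c_{-i},cᵢ)]`. -/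
def incentiveSum (U : ∀ i : N, (∀ j, C j) → ℝ) (μ : (∀ j, C j) → ℝ) (i : N) (cᵢ dᵢ : C i) : ℝ :=
  ∑ c : ∀ j, C j, if c i = cᵢ then μ c * (U i (Function.update c i dᵢ) - U i c) else 0

/-- Correlated equilibrium. -/
def IsCorrelatedEq (U : ∀ i : N, (∀ j, C j) → ℝ) (μ : (∀ j, C j) → ℝ) : Prop :=
  (∀ c, 0 ≤ μ c) ∧ (∑ c : ∀ j, C j, μ c) = 1 ∧
    ∀ (i : N) (cᵢ dᵢ : C i), incentiveSum U μ i cᵢ dᵢ ≤ 0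

/-- Multilinear extension: payoff of player `i` under the mixed strategy profile `σ`. -/
def mixedPayoff (U : ∀ i : N, (∀ j, C j) → ℝ) (σ : ∀ j, C j → ℝ) (i : N) : ℝ :=
  ∑ c : ∀ j, C j, (∏ j, σ j (c j)) * U i c

/-- Nash equilibrium. -/
def IsNash (U : ∀ i : N, (∀ j, C j) → ℝ) (σ : ∀ j, C j → ℝ) : Prop :=
  (∀ i, IsMixed (σ i)) ∧
  ∀ (i : N) (dᵢ : C i),
    mixedPayoff U (Function.update σ i (dirac dᵢ)) i ≤ mixedPayoff U σ i

/-- `D(c, α) = ∑_i [U_i(c_{-i}, α_i * c_i) − U_i(c)]`. -/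
def devGain (U : ∀ i : N, (∀ j, C j) → ℝ) (α : ∀ i, C i → C i → ℝ) (c : ∀ j, C j) : ℝ :=
  ∑ i, ((∑ dᵢ, α i (c i) dᵢ * U i (Function.update c i dᵢ)) - U i c)

/-- A dual vector: a profile of deviation plans with `D(c,α) ≥ 0` for all `c`. -/
def IsDualVector (U : ∀ i : N, (∀ j, C j) → ℝ) (α : ∀ i, C i → C i → ℝ) : Prop :=
  (∀ (i : N) (cᵢ : C i), IsMixed (α i cᵢ)) ∧ ∀ c, 0 ≤ devGain U α c

/-- A strong dual vector: `D(c,α) > 0` whenever `c` has probability zero in all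
correlated equilibria. -/
def IsStrong (U : ∀ i : N, (∀ j, C j) → ℝ) (α : ∀ i, C i → C i → ℝ) : Prop :=
  ∀ c : ∀ j, C j, (∀ μ, IsCorrelatedEq U μ → μ c = 0) → 0 < devGain U α c

/-- A full dual vector: `α_i(dᵢ|cᵢ) > 0` whenever `β_i(dᵢ|cᵢ) > 0` for some dual vector `β`. -/
def IsFull (U : ∀ i : N, (∀ j, C j) → ℝ) (α : ∀ i, C i → C i → ℝ) : Prop :=
  ∀ (i : N) (cᵢ dᵢ : C i),
    (∃ β : ∀ i, C i → C i → ℝ, IsDualVector U β ∧ 0 < β i cᵢ dᵢ) → 0 < α i cᵢ dᵢ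

end Games

lemma step_eq
    {N : Type} [Fintype N] [DecidableEq N]
    {C : N → Type} [∀ i, Fintype (C i)] [∀ i, DecidableEq (C i)]
    (U : ∀ i : N, (∀ j, C j) → ℝ) (α : ∀ i, C i → C i → ℝ)
    (τ : ∀ j, C j → ℝ) (j : N) :
    ∑ c : ∀ k, C k, (∏ k, τ k (c k)) * (∑ d, α j (c j) d * U j (Function.update c j d))
      = mixedPayoff U (Function.update τ j (devImage (α j) (τ j))) j := by
  have hinv : Function.Involutive
      (fun p : (∀ k, C k) × C j => (Function.update p.1 j p.2, p.1 j)) := by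
    rintro ⟨c, d⟩
    simp
  set G : (∀ k, C k) × C j → ℝ :=
    fun p => (∏ k, τ k (Function.update p.1 j p.2 k)) * (α j p.2 (p.1 j) * U j p.1) with hG
  have key : ∑ c : ∀ k, C k, (∏ k, τ k (c k)) * (∑ d, α j (c j) d * U j (Function.update c j d))
      = ∑ p : (∀ k, C k) × C j, G p := by
    rw [← Equiv.sum_comp hinv.toPerm G, Fintype.sum_prod_type]
    refine Finset.sum_congr rfl fun c _ => ?_
    rw [Finset.mul_sum]
    refine Finset.sum_congr rfl fun d _ => ?_
    simp only [hG, Function.Involutive.coe_toPerm]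
    simp [mul_assoc]
  rw [key, Fintype.sum_prod_type]
  unfold mixedPayoff
  refine Finset.sum_congr rfl fun c _ => ?_
  have h1 : ∀ d : C j, ∏ k, τ k (Function.update c j d k)
      = τ j d * ∏ k ∈ ({j}ᶜ : Finset N), τ k (c k) := by
    intro d
    rw [Fintype.prod_eq_mul_prod_compl j]
    simp only [Function.update_self]
    congr 1
    exact Finset.prod_congr rfl fun k hk => by
      rw [Function.update_of_ne (Finset.mem_compl.mp hk ∘ Finset.mem_singleton.mpr)]
  have h2 : ∏ k, Function.update τ j (devImage (α j) (τ j)) k (c k)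
      = devImage (α j) (τ j) (c j) * ∏ k ∈ ({j}ᶜ : Finset N), τ k (c k) := by
    rw [Fintype.prod_eq_mul_prod_compl j]
    simp only [Function.update_self]
    congr 1
    exact Finset.prod_congr rfl fun k hk => by
      rw [Function.update_of_ne (Finset.mem_compl.mp hk ∘ Finset.mem_singleton.mpr)]
  simp only [hG, h1, h2, devImage, Finset.sum_mul]
  refine Finset.sum_congr rfl fun d _ => ?_
  ring

/-- If `α` is a strong dual vector and `σ j` is `α j`-stationary for every `j ≠ i`, then for
every pure strategy `cᵢ` of player `i` with marginal probability zero in all correlated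
equilibria, `U_i(σ_{-i}, cᵢ) < U_i(σ_{-i}, α_i * cᵢ)`. -/
theorem strong_dual_vector_strict_gain
    {N : Type} [Fintype N] [DecidableEq N] [Nonempty N]
    {C : N → Type} [∀ i, Fintype (C i)] [∀ i, DecidableEq (C i)] [∀ i, Nonempty (C i)]
    (U : ∀ i : N, (∀ j, C j) → ℝ) (α : ∀ i, C i → C i → ℝ)
    (hα : IsDualVector U α) (hstrong : IsStrong U α)
    (i : N) (σ : ∀ j, C j → ℝ) (hmix : ∀ j, IsMixed (σ j))
    (hstat : ∀ j, j ≠ i → IsStationaryStrat (α j) (σ j))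
    (cᵢ : C i) (hzero : ∀ μ, IsCorrelatedEq U μ → marginal μ i cᵢ = 0) :
    mixedPayoff U (Function.update σ i (dirac cᵢ)) i <
      mixedPayoff U (Function.update σ i (α i cᵢ)) i := by
  classical
  set σ' : ∀ j, C j → ℝ := Function.update σ i (dirac cᵢ) with hσ'
  have hmix' : ∀ j, IsMixed (σ' j) := by
    intro j
    by_cases hj : j = i
    · subst hj
      simp only [hσ', Function.update_self]
      refine ⟨fun s => ?_, ?_⟩
      · unfold dirac; positivity
      · simp [dirac]
    · simpa only [hσ', Function.update_of_ne hj] using hmix j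
  set w : (∀ j, C j) → ℝ := fun c => ∏ k, σ' k (c k) with hw
  have hwnn : ∀ c, 0 ≤ w c := fun c => Finset.prod_nonneg fun k _ => (hmix' k).1 _
  have hwsum : ∑ c, w c = 1 := by
    have h := Finset.prod_univ_sum (fun _ : N => (Finset.univ : Finset _))
      (fun k (x : C k) => σ' k x)
    rw [Fintype.piFinset_univ] at h
    rw [hw, ← h]
    exact Finset.prod_eq_one fun k _ => (hmix' k).2
  have hterm : ∀ j, ∑ c, w c * ((∑ d, α j (c j) d * U j (Function.update c j d)) - U j c)
      = mixedPayoff U (Function.update σ' j (devImage (α j) (σ' j))) j - mixedPayoff U σ' j := by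
    intro j
    simp_rw [mul_sub, Finset.sum_sub_distrib]
    congr 1
    exact step_eq U α σ' j
  have hkey : ∑ c, w c * devGain U α c
      = mixedPayoff U (Function.update σ i (α i cᵢ)) i
        - mixedPayoff U (Function.update σ i (dirac cᵢ)) i := by
    have swap : ∑ c, w c * devGain U α c
        = ∑ j, ∑ c, w c * ((∑ d, α j (c j) d * U j (Function.update c j d)) - U j c) := by
      unfold devGain
      simp_rw [Finset.mul_sum]
      exact Finset.sum_comm
    rw [swap]
    rw [Fintype.sum_eq_single i]
    · rw [hterm i]
      have hdev : devImage (α i) (σ' i) = α i cᵢ := by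
        funext d
        simp [hσ', devImage, dirac, ite_mul]
      rw [hdev]
      have hupd : Function.update σ' i (α i cᵢ) = Function.update σ i (α i cᵢ) := by
        rw [hσ', Function.update_idem]
      rw [hupd, hσ']
    · intro j hj
      rw [hterm j]
      have hstatj : devImage (α j) (σ' j) = σ' j := by
        have hσj : σ' j = σ j := Function.update_of_ne hj _ _
        rw [hσj]; exact hstat j hj
      rw [hstatj, Function.update_eq_self]
      ring
  have hD : ∀ c : ∀ j, C j, c i = cᵢ → 0 < devGain U α c := by
    intro c hc
    apply hstrong
    intro μ hμ
    have h0 := hzero μ hμ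
    unfold marginal at h0
    have hnn : ∀ c' ∈ (Finset.univ : Finset (∀ j, C j)),
        0 ≤ (if c' i = cᵢ then μ c' else 0) := by
      intro c' _
      split
      · exact hμ.1 _
      · exact le_rfl
    have h := (Finset.sum_eq_zero_iff_of_nonneg hnn).mp h0 c (Finset.mem_univ c)
    simpa [hc] using h
  obtain ⟨c₀, _, hc₀⟩ : ∃ c ∈ Finset.univ, w c ≠ 0 :=
    Finset.exists_ne_zero_of_sum_ne_zero (by rw [hwsum]; norm_num)
  have hc₀i : c₀ i = cᵢ := by
    have hne : σ' i (c₀ i) ≠ 0 := by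
      have := (Finset.prod_ne_zero_iff.mp hc₀) i (Finset.mem_univ i)
      exact this
    simp only [hσ', Function.update_self, dirac] at hne
    by_contra h
    simp [h] at hne
  have hpos : 0 < w c₀ * devGain U α c₀ :=
    mul_pos (lt_of_le_of_ne (hwnn c₀) (Ne.symm hc₀)) (hD c₀ hc₀i)
  have hle : w c₀ * devGain U α c₀ ≤ ∑ c, w c * devGain U α c :=
    Finset.single_le_sum (fun c _ => mul_nonneg (hwnn c) (hα.2 c)) (Finset.mem_univ c₀)
  rw [← hσ'] at hkey
  linarith
end

section
/- Let Γ' be a rescaling of the finite game Γ. If α is a dual vector of Γ, then there exists a dual vector α' of Γ' such that C_i/α'_i = C_i/α_i for every player i; in particular, the α-reduced game Γ'/α (with strategy sets C_i/α_i and the payoffs of Γ') is a dual reduction of Γ'. -/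
open scoped BigOperators

/-- `Γ'` (payoffs `U'`) is a rescaling of `Γ` (payoffs `U`): for every player `i`,
`U'_i(c) = a_i·U_i(c) + f_i(c_{-i})` with `a_i > 0`. -/
def IsRescaling {N : Type} [Fintype N] [DecidableEq N]
    {C : N → Type} [∀ i, Fintype (C i)] [∀ i, DecidableEq (C i)]
    (U U' : ∀ i : N, (∀ j, C j) → ℝ) : Prop :=
  ∀ i : N, ∃ a : ℝ, 0 < a ∧ ∃ f : (∀ j, C j) → ℝ,
    (∀ (c : ∀ j, C j) (dᵢ : C i), f (Function.update c i dᵢ) = f c) ∧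
    ∀ c, U' i c = a * U i c + f c

/-- If `Γ'` is a rescaling of `Γ` and `α` is a dual vector of `Γ`, then there is a dual
vector `α'` of `Γ'` inducing the same reduced strategy sets: `C_i/α'_i = C_i/α_i`. -/
theorem rescaling_dual_reduction
    {N : Type} [Fintype N] [DecidableEq N] [Nonempty N]
    {C : N → Type} [∀ i, Fintype (C i)] [∀ i, DecidableEq (C i)] [∀ i, Nonempty (C i)]
    (U U' : ∀ i : N, (∀ j, C j) → ℝ) (hres : IsRescaling U U')
    (α : ∀ i, C i → C i → ℝ) (hα : IsDualVector U α) :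
    ∃ α' : ∀ i, C i → C i → ℝ, IsDualVector U' α' ∧
      ∀ i : N, ReducedSet (α' i) = ReducedSet (α i) := by
  choose a ha f hf hU using hres
  set lam : ℝ := Finset.univ.inf' Finset.univ_nonempty a with hlam
  have hlampos : 0 < lam := by
    obtain ⟨j, _, hj⟩ := Finset.exists_mem_eq_inf' Finset.univ_nonempty a
    rw [hlam, hj]; exact ha j
  have hlamle : ∀ i, lam ≤ a i := fun i => Finset.inf'_le a (Finset.mem_univ i)
  set t : N → ℝ := fun i => lam / a i with htdef
  have htpos : ∀ i, 0 < t i := fun i => div_pos hlampos (ha i)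
  have htle : ∀ i, t i ≤ 1 := fun i => (div_le_one (ha i)).2 (hlamle i)
  have hta : ∀ i, t i * a i = lam := fun i => div_mul_cancel₀ lam (ne_of_gt (ha i))
  set A : ∀ i, C i → C i → ℝ :=
    fun i cᵢ d => (1 - t i) * (if d = cᵢ then 1 else 0) + t i * α i cᵢ d with hA
  refine ⟨A, ⟨?_, ?_⟩, ?_⟩
  · -- each A i cᵢ is a mixed strategy
    intro i cᵢ
    constructor
    · intro s
      have h1 : (0:ℝ) ≤ (1 - t i) * (if s = cᵢ then 1 else 0) := by
        apply mul_nonneg (by linarith [htle i]); split_ifs <;> norm_num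
      have h2 : (0:ℝ) ≤ t i * α i cᵢ s := mul_nonneg (htpos i).le ((hα.1 i cᵢ).1 s)
      simp only [hA]; linarith
    · have hs : ∑ d, α i cᵢ d = 1 := (hα.1 i cᵢ).2
      simp only [hA]
      rw [Finset.sum_add_distrib, ← Finset.mul_sum, ← Finset.mul_sum, hs,
        Finset.sum_ite_eq' Finset.univ cᵢ (fun _ => (1:ℝ))]
      simp
  · -- dual vector inequality
    intro c
    have key : devGain U' A c = lam * devGain U α c := by
      unfold devGain
      rw [Finset.mul_sum]
      refine Finset.sum_congr rfl fun i _ => ?_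
      have hs : ∑ d, α i (c i) d = 1 := (hα.1 i (c i)).2
      have expand : ∀ d, A i (c i) d * U' i (Function.update c i d)
          = (if d = c i then (1 - t i) * U' i c else 0)
            + (t i * a i * (α i (c i) d * U i (Function.update c i d))
               + (t i * f i c) * α i (c i) d) := by
        intro d
        simp only [hA]
        rw [hU i (Function.update c i d), hf i c d]
        split_ifs with h
        · subst h; rw [Function.update_eq_self, hU i c]; ring
        · ring
      rw [Finset.sum_congr rfl fun d _ => expand d, Finset.sum_add_distrib,
        Finset.sum_add_distrib, ← Finset.mul_sum, ← Finset.mul_sum,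
        Finset.sum_ite_eq' Finset.univ (c i), hs]
      simp only [Finset.mem_univ, if_true]
      rw [hU i c]
      have hne := (ha i).ne'
      simp only [htdef]
      field_simp
      ring
    rw [key]
    exact mul_nonneg hlampos.le (hα.2 c)
  · -- reduced sets coincide
    intro i
    have hdev : ∀ (σ : C i → ℝ) d,
        devImage (A i) σ d = (1 - t i) * σ d + t i * devImage (α i) σ d := by
      intro σ d
      unfold devImage
      have h1 : ∀ cc : C i, σ cc * A i cc d
          = (if d = cc then (1 - t i) * σ cc else 0) + t i * (σ cc * α i cc d) := by
        intro cc; simp only [hA]; split_ifs <;> ring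
      rw [Finset.sum_congr rfl fun cc _ => h1 cc, Finset.sum_add_distrib,
        Finset.sum_ite_eq Finset.univ d, ← Finset.mul_sum]
      simp
    have hstat : ∀ σ : C i → ℝ, IsStationaryStrat (A i) σ ↔ IsStationaryStrat (α i) σ := by
      intro σ
      unfold IsStationaryStrat
      rw [funext_iff, funext_iff]
      refine forall_congr' fun d => ?_
      rw [hdev]
      constructor
      · intro h
        have ht := (htpos i).ne'
        have : t i * devImage (α i) σ d = t i * σ d := by linarith
        exact mul_left_cancel₀ ht this
      · intro h; rw [h]; ring
    have habs : ∀ B : Finset (C i), IsAbsorbing (A i) B ↔ IsAbsorbing (α i) B := by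
      intro B
      constructor
      · rintro ⟨hne, h⟩
        refine ⟨hne, fun cc hc d hd => h cc hc d ?_⟩
        have h1 : (0:ℝ) ≤ (1 - t i) * (if d = cc then 1 else 0) := by
          apply mul_nonneg (by linarith [htle i]); split_ifs <;> norm_num
        have h2 : 0 < t i * α i cc d := mul_pos (htpos i) hd
        simp only [hA]; linarith
      · rintro ⟨hne, h⟩
        refine ⟨hne, fun cc hc d hd => ?_⟩
        by_cases hdc : d = cc
        · subst hdc; exact hc
        · apply h cc hc d
          simp only [hA, if_neg hdc, mul_zero, zero_add] at hd
          have hαnn := (hα.1 i cc).1 d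
          nlinarith [htpos i]
    have hmin : ∀ B : Finset (C i),
        IsMinimalAbsorbing (A i) B ↔ IsMinimalAbsorbing (α i) B := by
      intro B
      unfold IsMinimalAbsorbing
      rw [habs]
      refine and_congr_right fun _ => ?_
      exact forall_congr' fun B' => forall_congr' fun _ => imp_congr (habs B') Iff.rfl
    ext σ
    simp only [ReducedSet, Set.mem_setOf_eq, hstat σ]
    refine and_congr_right fun _ => and_congr_right fun _ => ?_
    exact exists_congr fun B => and_congr_left fun _ => hmin B
end

section
/- Let Γ be a finite game and let P be a set of permutations of the player set N such that C_i = C_{p(i)} for every i ∈ N and p ∈ P, and such that Γ is p-symmetric for every p ∈ P. Then there exists a dual vector α of Γ which is both strong and full and satisfies: for every p ∈ P and every player i, C_{p(i)}/α_{p(i)} = C_i/α_i, and the reduced game Γ/α (with strategy sets C_i/α_i) is p-symmetric for every p ∈ P. -/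
open scoped BigOperators InnerProductSpace

section Farkas

variable {κ ι : Type} [Fintype κ] [Fintype ι] [DecidableEq ι]
set_option linter.unusedSectionVars false

/-- The cone of nonnegative combinations of `v t`, `t ∈ s`. -/
def coneOf (v : ι → EuclideanSpace ℝ κ) (s : Finset ι) : Set (EuclideanSpace ℝ κ) :=
  {x | ∃ y : ι → ℝ, (∀ t, 0 ≤ y t) ∧ x = ∑ t ∈ s, y t • v t}

lemma coneOf_mono (v : ι → EuclideanSpace ℝ κ) {s s' : Finset ι} (h : s ⊆ s') :
    coneOf v s ⊆ coneOf v s' := by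
  classical
  rintro x ⟨y, hy, rfl⟩
  refine ⟨fun t => if t ∈ s then y t else 0, fun t => by dsimp; split <;> simp [hy], ?_⟩
  rw [← Finset.sum_subset h (fun t _ ht => by simp [ht])]
  exact (Finset.sum_congr rfl fun t ht => by simp [ht]).symm

lemma reduce_step (v : ι → EuclideanSpace ℝ κ) (s : Finset ι) (y c : ι → ℝ)
    (hy : ∀ t, 0 ≤ y t) (hc0 : ∑ t ∈ s, c t • v t = 0)
    {t₁ : ι} (ht₁ : t₁ ∈ s) (hpos : 0 < c t₁) :
    ∃ t₀ ∈ s, (∑ t ∈ s, y t • v t) ∈ coneOf v (s.erase t₀) := by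
  classical
  set sp := s.filter (fun t => 0 < c t) with hsp
  have hne : sp.Nonempty := ⟨t₁, by simp [hsp, ht₁, hpos]⟩
  obtain ⟨t₀, ht₀, hmin⟩ := sp.exists_min_image (fun t => y t / c t) hne
  have ht₀s : t₀ ∈ s := (Finset.mem_filter.mp ht₀).1
  have hct₀ : 0 < c t₀ := (Finset.mem_filter.mp ht₀).2
  set τ := y t₀ / c t₀ with hτ
  have hτ0 : 0 ≤ τ := div_nonneg (hy _) hct₀.le
  have key : ∀ t ∈ s, 0 ≤ y t - τ * c t := by
    intro t ht
    by_cases hct : 0 < c t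
    · have := hmin t (Finset.mem_filter.mpr ⟨ht, hct⟩)
      have : τ * c t ≤ (y t / c t) * c t := by
        apply mul_le_mul_of_nonneg_right this hct.le
      rw [div_mul_cancel₀ _ hct.ne'] at this
      linarith
    · push_neg at hct
      have : τ * c t ≤ 0 := mul_nonpos_of_nonneg_of_nonpos hτ0 hct
      have := hy t; linarith
  refine ⟨t₀, ht₀s, ⟨fun t => if t ∈ s.erase t₀ then y t - τ * c t else 0,
    fun t => by dsimp; split_ifs with h; exacts [key t (Finset.mem_of_mem_erase h), le_refl 0], ?_⟩⟩
  have h1 : ∑ t ∈ s.erase t₀, (if t ∈ s.erase t₀ then y t - τ * c t else 0) • v t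
      = ∑ t ∈ s.erase t₀, (y t - τ * c t) • v t :=
    Finset.sum_congr rfl fun t ht => by simp [ht]
  have h2 : ∑ t ∈ s.erase t₀, (y t - τ * c t) • v t = ∑ t ∈ s, (y t - τ * c t) • v t := by
    apply Finset.sum_erase
    have : y t₀ - τ * c t₀ = 0 := by
      rw [hτ, div_mul_cancel₀ _ hct₀.ne']; ring
    rw [this, zero_smul]
  rw [h1, h2]
  have : ∑ t ∈ s, (y t - τ * c t) • v t
      = (∑ t ∈ s, y t • v t) - τ • ∑ t ∈ s, c t • v t := by
    rw [Finset.smul_sum, ← Finset.sum_sub_distrib]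
    exact Finset.sum_congr rfl fun t _ => by rw [sub_smul, smul_smul]
  rw [this, hc0, smul_zero, sub_zero]

lemma cara_step (v : ι → EuclideanSpace ℝ κ) (s : Finset ι)
    (hdep : ¬ LinearIndependent ℝ (fun t : s => v t)) {x : EuclideanSpace ℝ κ}
    (hx : x ∈ coneOf v s) : ∃ t₀ ∈ s, x ∈ coneOf v (s.erase t₀) := by
  classical
  obtain ⟨y, hy, rfl⟩ := hx
  obtain ⟨g, hg0, i, hgi⟩ := Fintype.not_linearIndependent_iff.mp hdep
  set cf : ι → ℝ := fun t => if h : t ∈ s then g ⟨t, h⟩ else 0 with hcf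
  have hcs : ∑ t ∈ s, cf t • v t = 0 := by
    rw [← hg0, ← Finset.sum_attach s (fun t => cf t • v t)]
    exact Finset.sum_congr rfl fun t _ => by simp [hcf, t.2]
  rcases lt_trichotomy (g i) 0 with hneg | hzero | hposi
  · have hc0' : ∑ t ∈ s, (-cf) t • v t = 0 := by
      simpa [neg_smul] using congrArg Neg.neg hcs
    refine reduce_step v s y (-cf) hy hc0' (t₁ := (i : ι)) i.2 ?_
    simp only [Pi.neg_apply, hcf]
    rw [dif_pos i.2]
    simp only [Subtype.coe_eta]
    linarith
  · exact absurd hzero hgi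
  · refine reduce_step v s y cf hy hcs (t₁ := (i : ι)) i.2 ?_
    simp only [hcf]
    rw [dif_pos i.2]
    simpa [Subtype.coe_eta] using hposi

lemma cara (v : ι → EuclideanSpace ℝ κ) (s : Finset ι) :
    ∀ x ∈ coneOf v s, ∃ s' , s' ⊆ s ∧ LinearIndependent ℝ (fun t : s' => v t) ∧ x ∈ coneOf v s' := by
  classical
  induction s using Finset.strongInduction with
  | _ s ih =>
    intro x hx
    by_cases hli : LinearIndependent ℝ (fun t : s => v t)
    · exact ⟨s, Finset.Subset.refl s, hli, hx⟩
    · obtain ⟨t₀, ht₀, hx'⟩ := cara_step v s hli hx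
      obtain ⟨s', hs', hli', hx''⟩ := ih _ (Finset.erase_ssubset ht₀) x hx'
      exact ⟨s', hs'.trans (Finset.erase_subset _ _), hli', hx''⟩

lemma isClosed_coneOf_of_li (v : ι → EuclideanSpace ℝ κ) (s : Finset ι)
    (hli : LinearIndependent ℝ (fun t : s => v t)) : IsClosed (coneOf v s) := by
  classical
  set L : ((t : s) → ℝ) →ₗ[ℝ] EuclideanSpace ℝ κ :=
    Fintype.linearCombination ℝ (fun t : s => v t) with hL
  have hker : LinearMap.ker L = ⊥ := by
    rw [LinearMap.ker_eq_bot']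
    intro m hm
    rw [hL, Fintype.linearCombination_apply] at hm
    exact funext (Fintype.linearIndependent_iff.mp hli m hm)
  have hemb := LinearMap.isClosedEmbedding_of_injective hker
  have himg : coneOf v s = L '' {y : (t : s) → ℝ | ∀ i, 0 ≤ y i} := by
    ext x
    constructor
    · rintro ⟨y, hy, rfl⟩
      refine ⟨fun t => y t, fun t => hy t, ?_⟩
      rw [hL, Fintype.linearCombination_apply, Finset.sum_coe_sort s (fun t => y t • v t)]
    · rintro ⟨w, hw, rfl⟩
      refine ⟨fun t => if h : t ∈ s then w ⟨t, h⟩ else 0, fun t => by dsimp; split <;> simp [hw _], ?_⟩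
      rw [hL, Fintype.linearCombination_apply, ← Finset.sum_coe_sort s
        (fun t => (if h : t ∈ s then w ⟨t, h⟩ else 0) • v t)]
      exact Finset.sum_congr rfl fun t _ => by simp [t.2]
  rw [himg]
  apply hemb.isClosedMap
  have : {y : (t : s) → ℝ | ∀ i, 0 ≤ y i} = ⋂ i, {y : (t : s) → ℝ | 0 ≤ y i} := by
    ext y; simp [Set.mem_iInter]
  rw [this]
  exact isClosed_iInter fun i => isClosed_le continuous_const (continuous_apply i)

lemma isClosed_coneOf_univ (v : ι → EuclideanSpace ℝ κ) : IsClosed (coneOf v Finset.univ) := by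
  classical
  have : coneOf v Finset.univ =
      ⋃ s : {s : Finset ι // LinearIndependent ℝ (fun t : s => v t)}, coneOf v s := by
    ext x
    simp only [Set.mem_iUnion]
    constructor
    · intro hx
      obtain ⟨s', _, hli, hx'⟩ := cara v Finset.univ x hx
      exact ⟨⟨s', hli⟩, hx'⟩
    · rintro ⟨s, hx⟩
      exact coneOf_mono v (Finset.subset_univ _) hx
  rw [this]
  exact isClosed_iUnion_of_finite fun s => isClosed_coneOf_of_li v s s.2

theorem farkas (v : ι → EuclideanSpace ℝ κ) (b : EuclideanSpace ℝ κ) :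
    (∃ y : ι → ℝ, (∀ t, 0 ≤ y t) ∧ b = ∑ t, y t • v t) ∨
    (∃ μ : EuclideanSpace ℝ κ, (∀ t, ⟪v t, μ⟫_ℝ ≤ 0) ∧ 0 < ⟪b, μ⟫_ℝ) := by
  classical
  by_cases hb : b ∈ coneOf v Finset.univ
  · exact Or.inl hb
  · right
    set K : ConvexCone ℝ (EuclideanSpace ℝ κ) :=
      { carrier := coneOf v Finset.univ
        smul_mem' := by
          rintro c hc x ⟨y, hy, rfl⟩
          exact ⟨fun t => c * y t, fun t => mul_nonneg hc.le (hy t), by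
            rw [Finset.smul_sum]; exact Finset.sum_congr rfl fun t _ => by rw [smul_smul]⟩
        add_mem' := by
          rintro x ⟨y, hy, rfl⟩ z ⟨w, hw, rfl⟩
          exact ⟨fun t => y t + w t, fun t => add_nonneg (hy t) (hw t), by
            rw [← Finset.sum_add_distrib]
            exact Finset.sum_congr rfl fun t _ => (add_smul (y t) (w t) (v t)).symm⟩ } with hK
    have hne : (K : Set (EuclideanSpace ℝ κ)).Nonempty :=
      ⟨0, ⟨fun _ => 0, fun _ => le_refl 0, by simp⟩⟩
    obtain ⟨y, hy1, hy2⟩ : ∃ y, (∀ x ∈ K, 0 ≤ ⟪x, y⟫_ℝ) ∧ ⟪b, y⟫_ℝ < 0 := by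
      let K' : ProperCone ℝ (EuclideanSpace ℝ κ) :=
        { carrier := coneOf v Finset.univ
          add_mem' := fun ha hb' => K.add_mem' ha hb'
          zero_mem' := ⟨fun _ => 0, fun _ => le_refl 0, by simp⟩
          smul_mem' := by
            rintro c x ⟨y, hy, rfl⟩
            exact ⟨fun t => (c:ℝ) * y t, fun t => mul_nonneg c.2 (hy t), by
              change (c:ℝ) • ∑ t, y t • v t = _
              rw [Finset.smul_sum]
              exact Finset.sum_congr rfl fun t _ => by rw [smul_smul]⟩
          isClosed' := isClosed_coneOf_univ v }
      exact ProperCone.hyperplane_separation' K' hb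
    refine ⟨-y, fun t => ?_, ?_⟩
    · have hvt : v t ∈ K := by
        refine ⟨fun t' => if t' = t then 1 else 0, fun t' => by dsimp; split <;> norm_num, ?_⟩
        simp [ite_smul]
      have := hy1 (v t) hvt
      rw [inner_neg_right]
      linarith
    · rw [inner_neg_right, real_inner_comm]
      linarith [real_inner_comm b y]

end Farkas



open scoped BigOperators

section Perm

variable {N : Type} (C : N → Type)

/-- From `C (p i) = C i` for all `i`, derive `C (p⁻¹ j) = C j`. -/
def permTypeEq (p : Equiv.Perm N) (hp : ∀ i, C (p i) = C i) (j : N) :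
    C (p.symm j) = C j :=
  (hp (p.symm j)).symm.trans (congrArg C (p.apply_symm_apply j))

/-- The permuted pure strategy profile `c^p`, characterized by `c^p (p i) = c i`. -/
def permProfile (p : Equiv.Perm N) (hp : ∀ i, C (p i) = C i) (c : ∀ j, C j) :
    ∀ j, C j :=
  fun j => cast (permTypeEq C p hp j) (c (p.symm j))

/-- The permuted mixed strategy profile `σ^p`, characterized by `σ^p (p i) = σ i`. -/
def permMixed (p : Equiv.Perm N) (hp : ∀ i, C (p i) = C i) (σ : ∀ j, C j → ℝ) :
    ∀ j, C j → ℝ :=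
  fun j d => σ (p.symm j) (cast (permTypeEq C p hp j).symm d)

end Perm

section Games2

open scoped InnerProductSpace

variable {N : Type} [Fintype N] [DecidableEq N]
  {C : N → Type} [∀ i, Fintype (C i)] [∀ i, DecidableEq (C i)]

/-- The incentive vector `g_{i,cᵢ,dᵢ}` as a function on profiles. -/
def gvec (U : ∀ i : N, (∀ j, C j) → ℝ) (t : Σ i : N, C i × C i) : (∀ j, C j) → ℝ :=
  fun c => if c t.1 = t.2.1 then U t.1 (Function.update c t.1 t.2.2) - U t.1 c else 0

/-- Linear gain `∑_t y_t g_t(c)`. -/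
def lgain (U : ∀ i : N, (∀ j, C j) → ℝ) (y : (Σ i : N, C i × C i) → ℝ) (c : ∀ j, C j) : ℝ :=
  ∑ t, y t * gvec U t c

lemma lgain_eq (U : ∀ i : N, (∀ j, C j) → ℝ) (y : (Σ i : N, C i × C i) → ℝ) (c : ∀ j, C j) :
    lgain U y c = ∑ i, ∑ d, y ⟨i, (c i, d)⟩ * (U i (Function.update c i d) - U i c) := by
  classical
  rw [lgain, ← Finset.univ_sigma_univ, Finset.sum_sigma]
  refine Finset.sum_congr rfl fun i _ => ?_
  rw [Fintype.sum_prod_type]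
  rw [Finset.sum_eq_single (c i)]
  · exact Finset.sum_congr rfl fun d _ => by simp [gvec]
  · intro a _ ha
    apply Finset.sum_eq_zero
    intro d _
    simp [gvec, Ne.symm ha]
  · simp

lemma incentiveSum_eq (U : ∀ i : N, (∀ j, C j) → ℝ) (μ : (∀ j, C j) → ℝ) (i : N) (ci di : C i) :
    incentiveSum U μ i ci di = ∑ c, μ c * gvec U ⟨i, (ci, di)⟩ c := by
  refine Finset.sum_congr rfl fun c _ => ?_
  simp only [gvec, incentiveSum, mul_ite, mul_zero]

/-- Farkas applied to the correlated equilibrium LP. -/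
lemma exists_strong_y (U : ∀ i : N, (∀ j, C j) → ℝ) (cs : ∀ j, C j)
    (hbad : ∀ μ, IsCorrelatedEq U μ → μ cs = 0) :
    ∃ y : (Σ i : N, C i × C i) → ℝ, (∀ t, 0 ≤ y t) ∧ (∀ c, 0 ≤ lgain U y c) ∧
      0 < lgain U y cs := by
  classical
  let ev : (∀ j, C j) → EuclideanSpace ℝ (∀ j, C j) := fun c => WithLp.toLp 2 (fun c' => if c' = c then 1 else 0)
  let v : ((Σ i : N, C i × C i) ⊕ (∀ j, C j)) → EuclideanSpace ℝ (∀ j, C j) :=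
    Sum.elim (fun t => WithLp.toLp 2 (gvec U t : (∀ j, C j) → ℝ)) (fun c => -(ev c))
  have hev : ∀ c c' : ∀ j, C j, ev c' c = if c = c' then 1 else 0 := fun _ _ => rfl
  have evnn : ∀ c c' : ∀ j, C j, (0:ℝ) ≤ ev c' c := by
    intro c c'; rw [hev]; split <;> norm_num
  rcases farkas v (ev cs) with ⟨y, hy, hsum⟩ | ⟨μ, hμ1, hμ2⟩
  · have key : ∀ c, lgain U (fun t => y (Sum.inl t)) c
        = ev cs c + ∑ c', y (Sum.inr c') * ev c' c := by
      intro c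
      have hc : ev cs c = (∑ t, y t • v t) c := by rw [← hsum]
      have hc2 : (∑ t, y t • v t) c = ∑ t, y t * v t c := by
        rw [WithLp.ofLp_sum, Finset.sum_apply]
        exact Finset.sum_congr rfl fun t _ => rfl
      have hc3 : ev cs c = (∑ t, y (Sum.inl t) * gvec U t c)
          + ∑ c', y (Sum.inr c') * (-(ev c' c)) := by
        rw [hc, hc2, Fintype.sum_sum_type]
        rfl
      have hS : ∑ c', y (Sum.inr c') * (-(ev c' c))
          = - ∑ c', y (Sum.inr c') * ev c' c := by
        rw [← Finset.sum_neg_distrib]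
        exact Finset.sum_congr rfl fun _ _ => by ring
      have hl : lgain U (fun t => y (Sum.inl t)) c = ∑ t, y (Sum.inl t) * gvec U t c := rfl
      rw [hl]
      rw [hS] at hc3
      linarith
    have hnn : ∀ c, 0 ≤ lgain U (fun t => y (Sum.inl t)) c := by
      intro c
      rw [key]
      have h2 : 0 ≤ ∑ c', y (Sum.inr c') * ev c' c :=
        Finset.sum_nonneg fun c' _ => mul_nonneg (hy _) (evnn _ _)
      have := evnn c cs
      linarith
    refine ⟨fun t => y (Sum.inl t), fun t => hy _, hnn, ?_⟩
    rw [key]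
    have h2 : 0 ≤ ∑ c', y (Sum.inr c') * ev c' cs :=
      Finset.sum_nonneg fun c' _ => mul_nonneg (hy _) (evnn _ _)
    have : ev cs cs = 1 := by rw [hev]; simp
    linarith
  · exfalso
    have hinner : ∀ x w : EuclideanSpace ℝ (∀ j, C j), ⟪x, w⟫_ℝ = ∑ c, x c * w c := by
      intro x w
      rw [PiLp.inner_apply]
      exact Finset.sum_congr rfl fun c _ => by simp [RCLike.inner_apply, mul_comm]
    have hμnn : ∀ c, 0 ≤ μ c := by
      intro c
      have h := hμ1 (Sum.inr c)
      rw [hinner] at h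
      have hval : ∑ c', v (Sum.inr c) c' * μ c' = - μ c := by
        have h1 : ∀ c' : ∀ j, C j, v (Sum.inr c) c' * μ c' = -(if c' = c then μ c' else 0) := by
          intro c'
          show (-(if c' = c then (1:ℝ) else 0)) * μ c' = _
          split <;> ring
        rw [Finset.sum_congr rfl fun c' _ => h1 c', Finset.sum_neg_distrib]
        simp
      rw [hval] at h
      linarith
    have hμcs : 0 < μ cs := by
      rw [hinner] at hμ2
      have h1 : ∀ c : ∀ j, C j, ev cs c * μ c = (if c = cs then μ c else 0) := by
        intro c
        show (if c = cs then (1:ℝ) else 0) * μ c = _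
        split <;> ring
      rw [Finset.sum_congr rfl fun c _ => h1 c] at hμ2
      simpa using hμ2
    have htot : 0 < ∑ c, μ c :=
      lt_of_lt_of_le hμcs (Finset.single_le_sum (fun c _ => hμnn c) (Finset.mem_univ cs))
    set tot := ∑ c, μ c with htotdef
    have hCE : IsCorrelatedEq U (fun c => μ c / tot) := by
      refine ⟨fun c => div_nonneg (hμnn c) htot.le, ?_, ?_⟩
      · rw [← Finset.sum_div]
        exact div_self htot.ne'
      · intro i ci di
        rw [incentiveSum_eq]
        have : ∑ c, μ c / tot * gvec U ⟨i, (ci, di)⟩ c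
            = (∑ c, μ c * gvec U ⟨i, (ci, di)⟩ c) / tot := by
          rw [Finset.sum_div]
          exact Finset.sum_congr rfl fun c _ => by ring
        rw [this]
        apply div_nonpos_of_nonpos_of_nonneg _ htot.le
        have := hμ1 (Sum.inl ⟨i, (ci, di)⟩)
        rw [hinner] at this
        calc ∑ c, μ c * gvec U ⟨i, (ci, di)⟩ c
            = ∑ c, gvec U ⟨i, (ci, di)⟩ c * μ c := Finset.sum_congr rfl fun c _ => mul_comm _ _
          _ ≤ 0 := this
    have := hbad _ hCE
    rw [div_eq_zero_iff] at this
    rcases this with h | h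
    · exact hμcs.ne' h
    · exact htot.ne' h

end Games2

noncomputable section Games3

set_option linter.unusedSectionVars false
variable {N : Type} [Fintype N] [DecidableEq N]
  {C : N → Type} [∀ i, Fintype (C i)] [∀ i, DecidableEq (C i)]

/-- Deviation plan built from nonnegative weights `y`. -/
def yToDual (y : (Σ i : N, C i × C i) → ℝ) : ∀ i, C i → C i → ℝ :=
  fun i ci di => y ⟨i, (ci, di)⟩ / (1 + ∑ t, y t) +
    (if di = ci then 1 - (∑ d, y ⟨i, (ci, d)⟩) / (1 + ∑ t, y t) else 0)

/-- The identity deviation plan. -/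
def idDual : ∀ i : N, C i → C i → ℝ := fun _ ci di => if di = ci then 1 else 0

variable (U : ∀ i : N, (∀ j, C j) → ℝ)

lemma idDual_dual : IsDualVector U (idDual (C := C)) := by
  constructor
  · intro i ci
    exact ⟨fun d => by dsimp [idDual]; split <;> norm_num, by simp [idDual]⟩
  · intro c
    rw [devGain]
    apply le_of_eq
    symm
    apply Finset.sum_eq_zero
    intro i _
    have : ∑ dᵢ, idDual (C := C) i (c i) dᵢ * U i (Function.update c i dᵢ) = U i c := by
      rw [Finset.sum_eq_single (c i)]
      · simp [idDual]
      · intro d _ hd; simp [idDual, hd]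
      · simp
    rw [this, sub_self]

section Y

variable (y : (Σ i : N, C i × C i) → ℝ) (hy : ∀ t, 0 ≤ y t)
include hy

lemma yM_pos : 0 < 1 + ∑ t, y t := by
  have : 0 ≤ ∑ t, y t := Finset.sum_nonneg fun t _ => hy t
  linarith

lemma yRow_le (i : N) (ci : C i) : ∑ d, y ⟨i, (ci, d)⟩ ≤ ∑ t, y t := by
  classical
  have := Finset.sum_le_sum_of_subset_of_nonneg
    (Finset.subset_univ ((Finset.univ : Finset (C i)).map
      ⟨fun d => (⟨i, (ci, d)⟩ : Σ i : N, C i × C i), fun a b h => by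
        injection h with h1 h2; exact congrArg Prod.snd h2⟩))
    (fun t _ _ => hy t)
  rwa [Finset.sum_map] at this

lemma yToDual_mixed (i : N) (ci : C i) : IsMixed (yToDual y i ci) := by
  have hM := yM_pos y hy
  constructor
  · intro d
    apply add_nonneg (div_nonneg (hy _) hM.le)
    split
    · have h1 : ∑ d', y ⟨i, (ci, d')⟩ ≤ 1 + ∑ t, y t := by
        have := yRow_le y hy i ci; linarith
      have := div_le_one_of_le₀ h1 hM.le
      linarith
    · exact le_refl 0
  · show ∑ d, (y ⟨i, (ci, d)⟩ / (1 + ∑ t, y t) +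
      (if d = ci then 1 - (∑ d', y ⟨i, (ci, d')⟩) / (1 + ∑ t, y t) else 0)) = 1
    rw [Finset.sum_add_distrib, ← Finset.sum_div, Finset.sum_ite_eq' Finset.univ ci
      (fun _ => 1 - (∑ d', y ⟨i, (ci, d')⟩) / (1 + ∑ t, y t))]
    simp only [Finset.mem_univ, if_true]
    ring

lemma devGain_yToDual (c : ∀ j, C j) :
    devGain U (yToDual y) c = lgain U y c / (1 + ∑ t, y t) := by
  classical
  have hM := yM_pos y hy
  rw [devGain, lgain_eq, Finset.sum_div]
  refine Finset.sum_congr rfl fun i _ => ?_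
  have h1 : ∑ dᵢ, yToDual y i (c i) dᵢ * U i (Function.update c i dᵢ)
      = (∑ d, y ⟨i, (c i, d)⟩ * U i (Function.update c i d)) / (1 + ∑ t, y t)
        + (1 - (∑ d, y ⟨i, (c i, d)⟩) / (1 + ∑ t, y t)) * U i c := by
    have e1 : ∀ dᵢ : C i, yToDual y i (c i) dᵢ * U i (Function.update c i dᵢ)
        = y ⟨i, (c i, dᵢ)⟩ * U i (Function.update c i dᵢ) / (1 + ∑ t, y t)
          + (if dᵢ = c i then (1 - (∑ d, y ⟨i, (c i, d)⟩) / (1 + ∑ t, y t))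
              * U i (Function.update c i dᵢ) else 0) := by
      intro d
      rw [yToDual, add_mul, div_mul_eq_mul_div, ite_mul, zero_mul]
    rw [Finset.sum_congr rfl fun d _ => e1 d, Finset.sum_add_distrib, ← Finset.sum_div,
      Finset.sum_ite_eq' Finset.univ (c i)]
    simp only [Finset.mem_univ, if_true, Function.update_eq_self]
  rw [h1]
  have h2 : ∑ d, y ⟨i, (c i, d)⟩ * (U i (Function.update c i d) - U i c)
      = (∑ d, y ⟨i, (c i, d)⟩ * U i (Function.update c i d))
        - (∑ d, y ⟨i, (c i, d)⟩) * U i c := by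
    rw [Finset.sum_mul, ← Finset.sum_sub_distrib]
    exact Finset.sum_congr rfl fun d _ => by ring
  rw [h2]
  field_simp
  ring

end Y

lemma devGain_avg {γ : Type} [Fintype γ] (w : γ → ℝ) (hw : ∑ j, w j = 1)
    (F : γ → ∀ i, C i → C i → ℝ) (c : ∀ j, C j) :
    devGain U (fun i ci di => ∑ j, w j * F j i ci di) c
      = ∑ j, w j * devGain U (F j) c := by
  rw [devGain]
  have key : ∀ i : N, (∑ dᵢ, (∑ j, w j * F j i (c i) dᵢ) * U i (Function.update c i dᵢ)) - U i c
      = ∑ j, w j * ((∑ dᵢ, F j i (c i) dᵢ * U i (Function.update c i dᵢ)) - U i c) := by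
    intro i
    have h1 : ∑ dᵢ, (∑ j, w j * F j i (c i) dᵢ) * U i (Function.update c i dᵢ)
        = ∑ j, w j * ∑ dᵢ, F j i (c i) dᵢ * U i (Function.update c i dᵢ) := by
      rw [Finset.sum_congr rfl fun d (_ : d ∈ Finset.univ) =>
        Finset.sum_mul Finset.univ (fun j => w j * F j i (c i) d) (U i (Function.update c i d))]
      rw [Finset.sum_comm]
      exact Finset.sum_congr rfl fun j _ => by
        rw [Finset.mul_sum]
        exact Finset.sum_congr rfl fun d _ => by ring
    rw [h1]
    rw [Finset.sum_congr rfl fun j (_ : j ∈ Finset.univ) => mul_sub (w j)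
      (∑ dᵢ, F j i (c i) dᵢ * U i (Function.update c i dᵢ)) (U i c)]
    rw [Finset.sum_sub_distrib, ← Finset.sum_mul, hw, one_mul]
  rw [Finset.sum_congr rfl fun i (_ : i ∈ Finset.univ) => key i, Finset.sum_comm]
  exact Finset.sum_congr rfl fun j _ => by
    rw [devGain, Finset.mul_sum]

/-- Existence of a strong and full dual vector. -/
lemma exists_strong_full [Nonempty N] [∀ i, Nonempty (C i)] :
    ∃ α : ∀ i, C i → C i → ℝ, IsDualVector U α ∧ IsStrong U α ∧ IsFull U α := by
  classical
  have hS : ∀ c : ∀ j, C j, ∃ β : ∀ i, C i → C i → ℝ, IsDualVector U β ∧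
      ((∀ μ, IsCorrelatedEq U μ → μ c = 0) → 0 < devGain U β c) := by
    intro c
    by_cases h : ∀ μ, IsCorrelatedEq U μ → μ c = 0
    · obtain ⟨y, hy1, hy2, hy3⟩ := exists_strong_y U c h
      refine ⟨yToDual y, ⟨fun i ci => yToDual_mixed y hy1 i ci, fun c' => ?_⟩, fun _ => ?_⟩
      · rw [devGain_yToDual U y hy1]
        exact div_nonneg (hy2 c') (yM_pos y hy1).le
      · rw [devGain_yToDual U y hy1]
        exact div_pos hy3 (yM_pos y hy1)
    · exact ⟨idDual, idDual_dual U, fun hc => absurd hc h⟩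
  have hT : ∀ t : Σ i : N, C i × C i, ∃ β : ∀ i, C i → C i → ℝ, IsDualVector U β ∧
      ((∃ γ : ∀ i, C i → C i → ℝ, IsDualVector U γ ∧ 0 < γ t.1 t.2.1 t.2.2) →
        0 < β t.1 t.2.1 t.2.2) := by
    intro t
    by_cases h : ∃ γ : ∀ i, C i → C i → ℝ, IsDualVector U γ ∧ 0 < γ t.1 t.2.1 t.2.2
    · exact ⟨h.choose, h.choose_spec.1, fun _ => h.choose_spec.2⟩
    · exact ⟨idDual, idDual_dual U, fun hc => absurd hc h⟩
  choose S hS1 hS2 using hS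
  choose T hT1 hT2 using hT
  set F : ((∀ j, C j) ⊕ (Σ i : N, C i × C i)) → ∀ i, C i → C i → ℝ := Sum.elim S T with hF
  have hFd : ∀ j, IsDualVector U (F j) := by
    rintro (c | t)
    · exact hS1 c
    · exact hT1 t
  set n : ℕ := Fintype.card ((∀ j, C j) ⊕ (Σ i : N, C i × C i)) with hn
  have hn0 : 0 < n := Fintype.card_pos
  have hnR : (0:ℝ) < (n:ℝ) := by exact_mod_cast hn0
  have hw : ∑ _j : ((∀ j, C j) ⊕ (Σ i : N, C i × C i)), (n:ℝ)⁻¹ = 1 := by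
    rw [Finset.sum_const, Finset.card_univ, ← hn, nsmul_eq_mul, mul_inv_cancel₀ hnR.ne']
  refine ⟨fun i ci di => ∑ j, (n:ℝ)⁻¹ * F j i ci di, ⟨?_, ?_⟩, ?_, ?_⟩
  · intro i ci
    constructor
    · intro d
      exact Finset.sum_nonneg fun j _ => mul_nonneg (by positivity) (((hFd j).1 i ci).1 d)
    · rw [Finset.sum_comm]
      rw [Finset.sum_congr rfl fun j (_ : j ∈ Finset.univ) => by
        rw [← Finset.mul_sum, ((hFd j).1 i ci).2, mul_one]]
      exact hw
  · intro c
    rw [devGain_avg U _ hw F c]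
    exact Finset.sum_nonneg fun j _ => mul_nonneg (by positivity) ((hFd j).2 c)
  · intro c hc
    rw [devGain_avg U _ hw F c]
    refine Finset.sum_pos' (fun j _ => mul_nonneg (by positivity) ((hFd j).2 c)) ?_
    exact ⟨Sum.inl c, Finset.mem_univ _, mul_pos (by positivity) (hS2 c hc)⟩
  · rintro i ci di ⟨β, hβ⟩
    refine Finset.sum_pos' (fun j _ => mul_nonneg (by positivity)
      (((hFd j).1 i ci).1 di)) ?_
    exact ⟨Sum.inr ⟨i, (ci, di)⟩, Finset.mem_univ _, mul_pos (by positivity)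
      (hT2 ⟨i, (ci, di)⟩ ⟨β, hβ⟩)⟩

end Games3

section CastHelpers

variable {N : Type} [DecidableEq N] {C : N → Type}

lemma app_congr (f : ∀ j : N, C j → ℝ) (c : ∀ j, C j) {a b : N} (h : a = b) :
    f a (c a) = f b (c b) := by subst h; rfl

lemma fun_congr (U : ∀ i : N, (∀ j, C j) → ℝ) {a b : N} (h : a = b) (c : ∀ j, C j) :
    U a c = U b c := by subst h; rfl

lemma update_heq (c : ∀ j, C j) {a j₀ : N} (x : C j₀) (h : a = j₀) :
    HEq (Function.update c j₀ x a) x := by subst h; simp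

lemma pi_app_heq (c : ∀ j, C j) {a b : N} (h : a = b) : HEq (c a) (c b) := by subst h; exact HEq.rfl

lemma update_congr (c : ∀ j, C j) {a b : N} (h : a = b) (x : C a) (y : C b)
    (hxy : HEq x y) : Function.update c a x = Function.update c b y := by
  subst h; rw [eq_of_heq hxy]

end CastHelpers

section Perm2

variable {N : Type} [Fintype N] [DecidableEq N]
  {C : N → Type} [∀ i, Fintype (C i)] [∀ i, DecidableEq (C i)]

/-- The permutation of profiles induced by `q`, as an equivalence. -/
def profEquiv (q : Equiv.Perm N) (h : ∀ i, C (q i) = C i) : (∀ j, C j) ≃ (∀ j, C j) where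
  toFun := permProfile C q h
  invFun := permProfile C q.symm (permTypeEq C q h)
  left_inv := fun c => funext fun j =>
    eq_of_heq (((cast_heq _ _).trans (cast_heq _ _)).trans (pi_app_heq c (q.symm_apply_apply j)))
  right_inv := fun c => funext fun j =>
    eq_of_heq (((cast_heq _ _).trans (cast_heq _ _)).trans (pi_app_heq c (q.apply_symm_apply j)))

lemma profEquiv_symm_apply (q : Equiv.Perm N) (h : ∀ i, C (q i) = C i)
    (c : ∀ j, C j) (i : N) :
    (profEquiv q h).symm c (q.symm i) = cast (permTypeEq C q h i).symm (c i) := by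
  refine eq_of_heq (((cast_heq _ _).trans (pi_app_heq c (q.apply_symm_apply i))).trans
    (cast_heq _ _).symm)

lemma permProfile_update (q : Equiv.Perm N) (h : ∀ i, C (q i) = C i)
    (c : ∀ j, C j) (i : N) (x : C i) :
    permProfile C q h (Function.update c i x)
      = Function.update (permProfile C q h c) (q i) (cast (h i).symm x) := by
  funext j
  by_cases hj : j = q i
  · subst hj
    rw [Function.update_self]
    exact eq_of_heq (((cast_heq _ _).trans
      (update_heq c x (q.symm_apply_apply i))).trans (cast_heq _ _).symm)
  · rw [Function.update_of_ne hj]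
    have hj' : q.symm j ≠ i := fun h' => hj (by rw [← h', q.apply_symm_apply])
    show cast _ (Function.update c i x (q.symm j)) = cast _ (c (q.symm j))
    rw [Function.update_of_ne hj']

variable (U : ∀ i : N, (∀ j, C j) → ℝ)

/-- `q` is a symmetry of the game `U`. -/
def SymP (q : Equiv.Perm N) : Prop :=
  ∃ h : ∀ i, C (q i) = C i, ∀ (i : N) (c : ∀ j, C j), U (q i) (permProfile C q h c) = U i c

lemma symP_one : SymP U 1 := by
  refine ⟨fun i => rfl, fun i c => ?_⟩
  have : permProfile C 1 (fun i => rfl) c = c := funext fun j =>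
    eq_of_heq ((cast_heq _ _).trans (pi_app_heq c rfl))
  rw [this]
  exact fun_congr U (Equiv.Perm.one_apply i) c

lemma symP_mul {q r : Equiv.Perm N} (hq : SymP U q) (hr : SymP U r) : SymP U (q * r) := by
  obtain ⟨h1, hU1⟩ := hq
  obtain ⟨h2, hU2⟩ := hr
  refine ⟨fun i => (h1 (r i)).trans (h2 i), fun i c => ?_⟩
  have key : permProfile C (q * r) (fun i => (h1 (r i)).trans (h2 i)) c
      = permProfile C q h1 (permProfile C r h2 c) := by
    funext j
    exact eq_of_heq ((cast_heq _ _).trans ((cast_heq _ _).trans (cast_heq _ _)).symm)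
  rw [key]
  have := hU1 (r i) (permProfile C r h2 c)
  rw [show ((q * r) i) = q (r i) from rfl, this, hU2]

lemma symP_inv {q : Equiv.Perm N} (hq : SymP U q) : SymP U q⁻¹ := by
  obtain ⟨h1, hU1⟩ := hq
  refine ⟨permTypeEq C q h1, fun i c => ?_⟩
  have h2 := hU1 (q.symm i) ((profEquiv q h1).symm c)
  have h3 : permProfile C q h1 ((profEquiv q h1).symm c) = c := (profEquiv q h1).right_inv c
  rw [h3] at h2
  have h4 : U (q (q.symm i)) c = U i c := fun_congr U (q.apply_symm_apply i) c
  rw [h4] at h2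
  exact h2.symm

/-- The action of a symmetry on a deviation plan profile. -/
def actD (q : Equiv.Perm N) (h : ∀ i, C (q i) = C i) (α : ∀ i, C i → C i → ℝ) :
    ∀ j, C j → C j → ℝ :=
  fun j cj dj => α (q.symm j) (cast (permTypeEq C q h j).symm cj)
    (cast (permTypeEq C q h j).symm dj)

lemma actD_one (h : ∀ i, C ((1 : Equiv.Perm N) i) = C i) (α : ∀ i, C i → C i → ℝ) :
    actD 1 h α = α := by
  funext j cj dj
  have h1 : cast (permTypeEq C 1 h j).symm cj = cj := eq_of_heq (cast_heq _ _)
  have h2 : cast (permTypeEq C 1 h j).symm dj = dj := eq_of_heq (cast_heq _ _)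
  show α ((1 : Equiv.Perm N).symm j) (cast (permTypeEq C 1 h j).symm cj)
    (cast (permTypeEq C 1 h j).symm dj) = α j cj dj
  rw [h1, h2]
  rfl

lemma actD_actD (q r : Equiv.Perm N) (hq : ∀ i, C (q i) = C i) (hr : ∀ i, C (r i) = C i)
    (hqr : ∀ i, C ((q * r) i) = C i) (α : ∀ i, C i → C i → ℝ) :
    actD q hq (actD r hr α) = actD (q * r) hqr α := by
  funext j cj dj
  show α (r.symm (q.symm j)) _ _ = α (r.symm (q.symm j)) _ _
  congr 1
  · exact eq_of_heq (((cast_heq _ _).trans (cast_heq _ _)).trans (cast_heq _ _).symm)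
  · exact eq_of_heq (((cast_heq _ _).trans (cast_heq _ _)).trans (cast_heq _ _).symm)

lemma actD_mixed (q : Equiv.Perm N) (h : ∀ i, C (q i) = C i) (α : ∀ i, C i → C i → ℝ)
    (hα : ∀ i ci, IsMixed (α i ci)) (j : N) (cj : C j) : IsMixed (actD q h α j cj) := by
  constructor
  · intro d
    exact (hα (q.symm j) _).1 _
  · rw [show (∑ d, actD q h α j cj d) = ∑ d, α (q.symm j) (cast (permTypeEq C q h j).symm cj)
      ((Equiv.cast (permTypeEq C q h j)).symm d) from rfl]
    rw [Equiv.sum_comp (Equiv.cast (permTypeEq C q h j)).symm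
      (α (q.symm j) (cast (permTypeEq C q h j).symm cj))]
    exact (hα (q.symm j) _).2

lemma devGain_actD (q : Equiv.Perm N) (h : ∀ i, C (q i) = C i)
    (hU : ∀ (i : N) (c : ∀ j, C j), U (q i) (permProfile C q h c) = U i c)
    (α : ∀ i, C i → C i → ℝ) (c : ∀ j, C j) :
    devGain U (actD q h α) c = devGain U α ((profEquiv q h).symm c) := by
  classical
  rw [devGain, devGain]
  rw [← Equiv.sum_comp q.symm (fun i' => (∑ dᵢ, α i' ((profEquiv q h).symm c i') dᵢ
    * U i' (Function.update ((profEquiv q h).symm c) i' dᵢ)) - U i' ((profEquiv q h).symm c))]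
  refine Finset.sum_congr rfl fun i _ => ?_
  have ha : (profEquiv q h).symm c (q.symm i) = cast (permTypeEq C q h i).symm (c i) :=
    profEquiv_symm_apply q h c i
  have hsum : ∑ dᵢ, α (q.symm i) ((profEquiv q h).symm c (q.symm i)) dᵢ
      * U (q.symm i) (Function.update ((profEquiv q h).symm c) (q.symm i) dᵢ)
      = ∑ d, actD q h α i (c i) d * U i (Function.update c i d) := by
    rw [← Equiv.sum_comp (Equiv.cast (permTypeEq C q h i)).symm
      (fun dᵢ => α (q.symm i) ((profEquiv q h).symm c (q.symm i)) dᵢ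
        * U (q.symm i) (Function.update ((profEquiv q h).symm c) (q.symm i) dᵢ))]
    refine Finset.sum_congr rfl fun d _ => ?_
    have h1 : α (q.symm i) ((profEquiv q h).symm c (q.symm i))
        ((Equiv.cast (permTypeEq C q h i)).symm d) = actD q h α i (c i) d := by
      rw [ha]; rfl
    have h2 : U (q.symm i) (Function.update ((profEquiv q h).symm c) (q.symm i)
        ((Equiv.cast (permTypeEq C q h i)).symm d)) = U i (Function.update c i d) := by
      have h3 := hU (q.symm i) (Function.update ((profEquiv q h).symm c) (q.symm i)
        ((Equiv.cast (permTypeEq C q h i)).symm d))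
      rw [permProfile_update] at h3
      have h4 : permProfile C q h ((profEquiv q h).symm c) = c := (profEquiv q h).right_inv c
      rw [h4] at h3
      have h5 : Function.update c (q (q.symm i)) (cast (h (q.symm i)).symm
          ((Equiv.cast (permTypeEq C q h i)).symm d)) = Function.update c i d := by
        refine update_congr c (q.apply_symm_apply i) _ _ ?_
        exact (cast_heq _ _).trans (cast_heq _ _)
      rw [h5] at h3
      rw [← h3]
      exact fun_congr U (q.apply_symm_apply i) _
    rw [h1, h2]
  have hlast : U (q.symm i) ((profEquiv q h).symm c) = U i c := by
    have h3 := hU (q.symm i) ((profEquiv q h).symm c)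
    have h4 : permProfile C q h ((profEquiv q h).symm c) = c := (profEquiv q h).right_inv c
    rw [h4] at h3
    rw [← h3]
    exact fun_congr U (q.apply_symm_apply i) c
  rw [hsum, hlast]

/-- Payoff invariance under a symmetry, for arbitrary mixed profiles. -/
lemma mixedPayoff_perm (q : Equiv.Perm N) (h : ∀ i, C (q i) = C i)
    (hU : ∀ (i : N) (c : ∀ j, C j), U (q i) (permProfile C q h c) = U i c)
    (σ : ∀ j, C j → ℝ) (i : N) :
    mixedPayoff U (permMixed C q h σ) (q i) = mixedPayoff U σ i := by
  rw [mixedPayoff, mixedPayoff]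
  rw [← Equiv.sum_comp (profEquiv q h)
    (fun c => (∏ j, permMixed C q h σ j (c j)) * U (q i) c)]
  refine Finset.sum_congr rfl fun c _ => ?_
  have hU' : U (q i) (profEquiv q h c) = U i c := hU i c
  have hprod : ∏ j, permMixed C q h σ j ((profEquiv q h) c j) = ∏ j, σ j (c j) := by
    rw [← Equiv.prod_comp q (fun j => permMixed C q h σ j ((profEquiv q h) c j))]
    refine Finset.prod_congr rfl fun j _ => ?_
    have h1 : permMixed C q h σ (q j) ((profEquiv q h) c (q j))
        = σ (q.symm (q j)) (c (q.symm (q j))) := by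
      show σ (q.symm (q j)) (cast (permTypeEq C q h (q j)).symm ((profEquiv q h) c (q j))) = _
      congr 1
      exact eq_of_heq ((cast_heq _ _).trans (cast_heq _ _))
    rw [h1]
    exact app_congr σ c (q.symm_apply_apply j)
  rw [hprod, hU']

end Perm2

section Transport

variable {S S' : Type} [Fintype S] [Fintype S'] [DecidableEq S] [DecidableEq S']

lemma absorb_image (e : S ≃ S') (β : S' → S' → ℝ) (B : Finset S)
    (h : IsAbsorbing (fun c d => β (e c) (e d)) B) : IsAbsorbing β (B.image e) := by
  refine ⟨h.1.image e, ?_⟩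
  intro c' hc' d' hd'
  obtain ⟨c, hc, rfl⟩ := Finset.mem_image.mp hc'
  have hb : 0 < β (e c) (e (e.symm d')) := by rwa [Equiv.apply_symm_apply]
  exact Finset.mem_image.mpr ⟨e.symm d', h.2 c hc (e.symm d') hb, e.apply_symm_apply d'⟩

lemma absorb_preimage (e : S ≃ S') (β : S' → S' → ℝ) (B : Finset S')
    (h : IsAbsorbing β B) : IsAbsorbing (fun c d => β (e c) (e d)) (B.image e.symm) := by
  refine ⟨h.1.image e.symm, ?_⟩
  intro c hc d hd
  obtain ⟨c', hc', rfl⟩ := Finset.mem_image.mp hc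
  have hb : 0 < β c' (e d) := by
    simp only at hd
    rwa [Equiv.apply_symm_apply] at hd
  exact Finset.mem_image.mpr ⟨e d, h.2 c' hc' (e d) hb, e.symm_apply_apply d⟩

lemma minabs_image (e : S ≃ S') (β : S' → S' → ℝ) (B : Finset S)
    (h : IsMinimalAbsorbing (fun c d => β (e c) (e d)) B) :
    IsMinimalAbsorbing β (B.image e) := by
  refine ⟨absorb_image e β B h.1, ?_⟩
  intro B' hB' habs
  have h1 : B'.image e.symm ⊆ B := by
    intro x hx
    obtain ⟨x', hx', rfl⟩ := Finset.mem_image.mp hx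
    obtain ⟨b, hb, hbe⟩ := Finset.mem_image.mp (hB' hx')
    rwa [← hbe, e.symm_apply_apply]
  have h3 := h.2 _ h1 (absorb_preimage e β B' habs)
  rw [← h3, Finset.image_image]
  ext x
  simp

lemma mixed_transport (e : S ≃ S') (σ : S → ℝ) (h : IsMixed σ) :
    IsMixed (fun d => σ (e.symm d)) :=
  ⟨fun _ => h.1 _, by rw [Equiv.sum_comp e.symm σ]; exact h.2⟩

lemma stationary_transport (e : S ≃ S') (β : S' → S' → ℝ) (σ : S → ℝ)
    (h : IsStationaryStrat (fun c d => β (e c) (e d)) σ) :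
    IsStationaryStrat β (fun d => σ (e.symm d)) := by
  funext d'
  have h0 := congrFun h (e.symm d')
  show devImage β (fun d => σ (e.symm d)) d' = σ (e.symm d')
  rw [← h0]
  show ∑ c', σ (e.symm c') * β c' d' = devImage (fun c d => β (e c) (e d)) σ (e.symm d')
  rw [devImage]
  rw [← Equiv.sum_comp e (fun c' => σ (e.symm c') * β c' d')]
  refine Finset.sum_congr rfl fun c _ => ?_
  rw [e.symm_apply_apply, e.apply_symm_apply]

lemma reduced_mp (e : S ≃ S') (β : S' → S' → ℝ) (σ : S → ℝ)
    (h : σ ∈ ReducedSet (fun c d => β (e c) (e d))) :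
    (fun d => σ (e.symm d)) ∈ ReducedSet β := by
  obtain ⟨h1, h2, B, h3, h4⟩ := h
  refine ⟨mixed_transport e σ h1, stationary_transport e β σ h2, B.image e,
    minabs_image e β B h3, ?_⟩
  intro s' hs'
  exact Finset.mem_image.mpr ⟨e.symm s', h4 _ hs', e.apply_symm_apply s'⟩

lemma reducedSet_transport (e : S ≃ S') (β : S' → S' → ℝ) (σ : S → ℝ) :
    σ ∈ ReducedSet (fun c d => β (e c) (e d)) ↔
      (fun d => σ (e.symm d)) ∈ ReducedSet β := by
  constructor
  · exact reduced_mp e β σ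
  · intro h
    have hβ : (fun c' d' => β (e (e.symm c')) (e (e.symm d'))) = β := by
      funext c' d'; rw [e.apply_symm_apply, e.apply_symm_apply]
    have h2 := reduced_mp e.symm (fun c d => β (e c) (e d)) (fun d => σ (e.symm d))
      (by rw [hβ]; exact h)
    have hσ : (fun d => (fun d' => σ (e.symm d')) (e.symm.symm d)) = σ := by
      funext d
      show σ (e.symm (e.symm.symm d)) = σ d
      rw [e.symm_symm, e.symm_apply_apply]
    rwa [hσ] at h2

end Transport

/-- If `Γ` is `P`-symmetric, then there is a strong and full dual vector `α` which is
`P`-symmetric (`α_{p(i)} = α_i`, so that `C_{p(i)}/α_{p(i)} = C_i/α_i`) and whose reduced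
game is again `p`-symmetric for every `p ∈ P`. -/
theorem symmetric_game_symmetric_reduction
    {N : Type} [Fintype N] [DecidableEq N] [Nonempty N]
    {C : N → Type} [∀ i, Fintype (C i)] [∀ i, DecidableEq (C i)] [∀ i, Nonempty (C i)]
    (U : ∀ i : N, (∀ j, C j) → ℝ)
    (P : Set (Equiv.Perm N)) (hC : ∀ p ∈ P, ∀ i, C (p i) = C i)
    (hsym : ∀ p (hp : p ∈ P), ∀ (i : N) (c : ∀ j, C j),
      U (p i) (permProfile C p (hC p hp) c) = U i c) :
    ∃ α : ∀ i, C i → C i → ℝ, IsDualVector U α ∧ IsStrong U α ∧ IsFull U α ∧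
      ∀ p (hp : p ∈ P),
        (∀ (j : N) (cj dj : C (p.symm j)),
          α (p.symm j) cj dj =
            α j (cast (permTypeEq C p (hC p hp) j) cj)
              (cast (permTypeEq C p (hC p hp) j) dj)) ∧
        (∀ (j : N) (σ : C (p.symm j) → ℝ),
          σ ∈ ReducedSet (α (p.symm j)) ↔
            (fun d : C j => σ (cast (permTypeEq C p (hC p hp) j).symm d))
              ∈ ReducedSet (α j)) ∧
        (∀ σ : ∀ j, C j → ℝ, (∀ j, σ j ∈ ReducedSet (α j)) →
          ∀ i : N, mixedPayoff U (permMixed C p (hC p hp) σ) (p i) =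
            mixedPayoff U σ i) := by
  classical
  obtain ⟨α₀, hα₀d, hα₀s, hα₀f⟩ := exists_strong_full U
  set SG : Finset (Equiv.Perm N) := Finset.univ.filter (SymP U) with hSG
  have hmemSG : ∀ q, q ∈ SG ↔ SymP U q := fun q => by simp [hSG]
  have h1SG : (1 : Equiv.Perm N) ∈ SG := (hmemSG 1).mpr (symP_one U)
  have hPSG : ∀ p ∈ P, SymP U p := fun p hp => ⟨hC p hp, hsym p hp⟩
  have hmul : ∀ p q, SymP U p → q ∈ SG → p * q ∈ SG := fun p q hp hq =>
    (hmemSG _).mpr (symP_mul U hp ((hmemSG q).mp hq))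
  have hinvmul : ∀ p q, SymP U p → q ∈ SG → p⁻¹ * q ∈ SG := fun p q hp hq =>
    (hmemSG _).mpr (symP_mul U (symP_inv U hp) ((hmemSG q).mp hq))
  set A : Equiv.Perm N → ∀ i, C i → C i → ℝ := fun q =>
    if hq : SymP U q then actD q hq.choose α₀ else α₀ with hA
  have hAq : ∀ q (hq : SymP U q), A q = actD q hq.choose α₀ := by
    intro q hq
    rw [hA]
    exact dif_pos hq
  have hA1 : A 1 = α₀ := by rw [hAq 1 (symP_one U), actD_one]
  have hAmix : ∀ (q : Equiv.Perm N) (i : N) (ci : C i), IsMixed (A q i ci) := by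
    intro q i ci
    by_cases hq : SymP U q
    · rw [hAq q hq]; exact actD_mixed q hq.choose α₀ hα₀d.1 i ci
    · simp only [hA]; rw [dif_neg hq]; exact hα₀d.1 i ci
  have hAgain : ∀ (q : Equiv.Perm N), ∀ c, 0 ≤ devGain U (A q) c := by
    intro q c
    by_cases hq : SymP U q
    · rw [hAq q hq, devGain_actD U q hq.choose hq.choose_spec α₀ c]
      exact hα₀d.2 _
    · simp only [hA]; rw [dif_neg hq]; exact hα₀d.2 c
  set m : ℝ := (SG.card : ℝ) with hm
  have hm0 : (0:ℝ) < m := by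
    rw [hm]
    exact_mod_cast Finset.card_pos.mpr ⟨1, h1SG⟩
  have hw : ∑ _q : {q // q ∈ SG}, m⁻¹ = 1 := by
    rw [Finset.sum_const, Finset.card_univ, Fintype.card_coe, hm, nsmul_eq_mul,
      mul_inv_cancel₀ hm0.ne']
  refine ⟨fun i ci di => ∑ q : {q // q ∈ SG}, m⁻¹ * A q i ci di, ⟨?_, ?_⟩, ?_, ?_, ?_⟩
  · -- mixed rows
    intro i ci
    constructor
    · intro d
      exact Finset.sum_nonneg fun q _ => mul_nonneg (by positivity) ((hAmix q i ci).1 d)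
    · rw [Finset.sum_comm]
      rw [Finset.sum_congr rfl fun (q : {q // q ∈ SG}) (_ : q ∈ Finset.univ) => by
        rw [← Finset.mul_sum, (hAmix q i ci).2, mul_one]]
      exact hw
  · -- dual
    intro c
    rw [devGain_avg U (fun _ => m⁻¹) hw (fun q : {q // q ∈ SG} => A q) c]
    exact Finset.sum_nonneg fun q _ => mul_nonneg (by positivity) (hAgain q c)
  · -- strong
    intro c hc
    rw [devGain_avg U (fun _ => m⁻¹) hw (fun q : {q // q ∈ SG} => A q) c]
    refine Finset.sum_pos' (fun q _ => mul_nonneg (by positivity) (hAgain q c)) ?_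
    refine ⟨⟨1, h1SG⟩, Finset.mem_univ _, ?_⟩
    have : devGain U (A 1) c = devGain U α₀ c := by rw [hA1]
    rw [this]
    exact mul_pos (by positivity) (hα₀s c hc)
  · -- full
    rintro i ci di hβ
    refine Finset.sum_pos' (fun q _ => mul_nonneg (by positivity) ((hAmix q i ci).1 di)) ?_
    refine ⟨⟨1, h1SG⟩, Finset.mem_univ _, ?_⟩
    have : A 1 i ci di = α₀ i ci di := by rw [hA1]
    rw [this]
    exact mul_pos (by positivity) (hα₀f i ci di hβ)
  · -- symmetry conditions
    intro p hp
    have hpS : SymP U p := hPSG p hp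
    -- invariance of the averaged α under actD p
    have hact : ∀ (j : N) (cj dj : C j),
        (∑ q : {q // q ∈ SG}, m⁻¹ * A q (p.symm j)
          (cast (permTypeEq C p hpS.choose j).symm cj)
          (cast (permTypeEq C p hpS.choose j).symm dj))
        = ∑ q : {q // q ∈ SG}, m⁻¹ * A q j cj dj := by
      intro j cj dj
      have step : ∀ q : {q // q ∈ SG},
          A q (p.symm j) (cast (permTypeEq C p hpS.choose j).symm cj)
            (cast (permTypeEq C p hpS.choose j).symm dj)
          = A (p * q) j cj dj := by
        intro q
        have hq : SymP U q := (hmemSG q).mp q.2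
        have hpq : SymP U (p * q) := symP_mul U hpS hq
        have e1 : actD p hpS.choose (A q) = A (p * q) := by
          rw [hAq q hq, hAq (p * q) hpq]
          exact actD_actD p q hpS.choose hq.choose hpq.choose α₀
        exact congrFun (congrFun (congrFun e1 j) cj) dj
      rw [Finset.sum_congr rfl fun q (_ : q ∈ Finset.univ) => by rw [step q]]
      -- reindex q ↦ p * q
      exact Equiv.sum_comp
        ({ toFun := fun q => ⟨p * q.1, hmul p q.1 hpS q.2⟩
           invFun := fun q => ⟨p⁻¹ * q.1, hinvmul p q.1 hpS q.2⟩
           left_inv := fun q => Subtype.ext (by simp [mul_assoc])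
           right_inv := fun q => Subtype.ext (by simp [mul_assoc]) } :
          {q // q ∈ SG} ≃ {q // q ∈ SG})
        (fun q : {q // q ∈ SG} => m⁻¹ * A q.1 j cj dj)
    have hcond1 : ∀ (j : N) (cj dj : C (p.symm j)),
        (∑ q : {q // q ∈ SG}, m⁻¹ * A q (p.symm j) cj dj)
        = ∑ q : {q // q ∈ SG}, m⁻¹ * A q j (cast (permTypeEq C p (hC p hp) j) cj)
            (cast (permTypeEq C p (hC p hp) j) dj) := by
      intro j cj dj
      have key := hact j (cast (permTypeEq C p (hC p hp) j) cj)
        (cast (permTypeEq C p (hC p hp) j) dj)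
      rw [← key]
      have e1 : cast (permTypeEq C p hpS.choose j).symm
          (cast (permTypeEq C p (hC p hp) j) cj) = cj :=
        eq_of_heq ((cast_heq _ _).trans (cast_heq _ _))
      have e2 : cast (permTypeEq C p hpS.choose j).symm
          (cast (permTypeEq C p (hC p hp) j) dj) = dj :=
        eq_of_heq ((cast_heq _ _).trans (cast_heq _ _))
      rw [e1, e2]
    refine ⟨hcond1, ?_, ?_⟩
    · -- reduced set transport
      intro j σ
      have hα : (fun cj dj => ∑ q : {q // q ∈ SG}, m⁻¹ * A q (p.symm j) cj dj)
          = fun cj dj => ∑ q : {q // q ∈ SG}, m⁻¹ * A q j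
              ((Equiv.cast (permTypeEq C p (hC p hp) j)) cj)
              ((Equiv.cast (permTypeEq C p (hC p hp) j)) dj) := by
        funext cj dj
        exact hcond1 j cj dj
      show σ ∈ ReducedSet (fun cj dj => ∑ q : {q // q ∈ SG}, m⁻¹ * A q (p.symm j) cj dj) ↔ _
      rw [hα]
      exact reducedSet_transport (Equiv.cast (permTypeEq C p (hC p hp) j))
        (fun cj dj => ∑ q : {q // q ∈ SG}, m⁻¹ * A q j cj dj) σ
    · -- payoff symmetry
      intro σ _ i
      exact mixedPayoff_perm U p (hC p hp) (hsym p hp) σ i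
end
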